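/- For every natural number i ≥ 1, the number of i-bit binary signed-digit representations of 2^{i-1} + 1 equals i - 1; that is, f(2^{i-1} + 1, i) = i - 1. -/

import Mathlib

open Finset

private lemma geom2 (m : ℕ) : ∑ j ∈ Finset.range m, (2:ℤ)^j = 2^m - 1 := by
  induction m with
  | zero => simp
  | succ n ih => rw [Finset.sum_range_succ, ih]; ring

private lemma bsd_abs_bound (m : ℕ) (b : ℕ → ℤ)
    (hb : ∀ j, b j = -1 ∨ b j = 0 ∨ b j = 1) :
    |∑ j ∈ Finset.range m, b j * 2^j| ≤ 2^m - 1 := by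
  calc |∑ j ∈ Finset.range m, b j * 2^j|
      ≤ ∑ j ∈ Finset.range m, |b j * 2^j| := Finset.abs_sum_le_sum_abs _ _
    _ ≤ ∑ j ∈ Finset.range m, (2:ℤ)^j := by
        apply Finset.sum_le_sum
        intro j _
        rw [abs_mul, abs_pow, abs_two]
        have h1 : |b j| ≤ 1 := by rcases hb j with h|h|h <;> simp [h]
        nlinarith [pow_pos (by norm_num : (0:ℤ) < 2) j]
    _ = 2^m - 1 := geom2 m

private lemma bsd_zero : ∀ (m : ℕ) (b : ℕ → ℤ),
    (∀ j, b j = -1 ∨ b j = 0 ∨ b j = 1) →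
    ∑ j ∈ Finset.range m, b j * 2^j = 0 → ∀ j < m, b j = 0 := by
  intro m
  induction m with
  | zero => intro b _ _ j hj; omega
  | succ n ih =>
    intro b hb hsum j hj
    rw [Finset.sum_range_succ'] at hsum
    have hfac : ∀ x ∈ Finset.range n, b (x+1) * 2^(x+1) = (b (x+1) * 2^x) * 2 := by
      intro x _; ring
    rw [Finset.sum_congr rfl hfac, ← Finset.sum_mul] at hsum
    simp only [pow_zero, mul_one] at hsum
    have hb0 : b 0 = 0 := by rcases hb 0 with h|h|h <;> omega
    have hS : ∑ x ∈ Finset.range n, b (x+1) * 2^x = 0 := by omega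
    rcases Nat.eq_zero_or_pos j with rfl | hj0
    · exact hb0
    · have := ih (fun x => b (x+1)) (fun x => hb (x+1)) hS (j-1) (by omega)
      simpa [Nat.sub_add_cancel hj0] using this

private lemma bsd_one : ∀ (m : ℕ) (b : ℕ → ℤ),
    (∀ j, b j = -1 ∨ b j = 0 ∨ b j = 1) →
    ∑ j ∈ Finset.range m, b j * 2^j = 1 →
    ∃ k < m, (∀ j < k, b j = -1) ∧ b k = 1 ∧ ∀ j, k < j → j < m → b j = 0 := by
  intro m
  induction m with
  | zero => intro b _ h; simp at h
  | succ n ih =>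
    intro b hb hsum
    rw [Finset.sum_range_succ'] at hsum
    have hfac : ∀ x ∈ Finset.range n, b (x+1) * 2^(x+1) = (b (x+1) * 2^x) * 2 := by
      intro x _; ring
    rw [Finset.sum_congr rfl hfac, ← Finset.sum_mul] at hsum
    simp only [pow_zero, mul_one] at hsum
    rcases hb 0 with h0 | h0 | h0
    · have hS : ∑ x ∈ Finset.range n, b (x+1) * 2^x = 1 := by omega
      obtain ⟨k, hk, hneg, hone, hzero⟩ := ih (fun x => b (x+1)) (fun x => hb (x+1)) hS
      refine ⟨k+1, by omega, ?_, by simpa using hone, ?_⟩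
      · intro j hj
        rcases Nat.eq_zero_or_pos j with rfl | hj0
        · exact h0
        · have := hneg (j-1) (by omega)
          simpa [Nat.sub_add_cancel hj0] using this
      · intro j h1 h2
        have := hzero (j-1) (by omega) (by omega)
        simpa [Nat.sub_add_cancel (by omega : 1 ≤ j)] using this
    · omega
    · have hS : ∑ x ∈ Finset.range n, b (x+1) * 2^x = 0 := by omega
      have hz := bsd_zero n (fun x => b (x+1)) (fun x => hb (x+1)) hS
      refine ⟨0, by omega, by omega, h0, ?_⟩
      intro j h1 h2
      have := hz (j-1) (by omega)
      simpa [Nat.sub_add_cancel (by omega : 1 ≤ j)] using this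

private def q (k j : ℕ) : ℤ := if j < k then -1 else if j = k then 1 else 0

private lemma q_sum : ∀ m k, k < m → ∑ j ∈ Finset.range m, q k j * 2^j = 1 := by
  intro m
  induction m with
  | zero => intro k h; omega
  | succ n ih =>
    intro k hk
    rcases Nat.lt_or_ge k n with h | h
    · rw [Finset.sum_range_succ, ih k h]
      have hq : q k n = 0 := by unfold q; split_ifs <;> omega
      rw [hq]; ring
    · have hkn : k = n := by omega
      subst hkn
      rw [Finset.sum_range_succ]
      have h1 : ∑ j ∈ Finset.range k, q k j * 2^j = (-1) * (2^k - 1) := by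
        have hc : ∀ j ∈ Finset.range k, q k j * 2^j = (-1) * 2^j := by
          intro j hj
          have hjk : j < k := Finset.mem_range.mp hj
          simp [q, hjk]
        rw [Finset.sum_congr rfl hc, ← Finset.mul_sum, geom2]
      have h2 : q k k = 1 := by simp [q]
      rw [h1, h2]; ring

/-- Number of `i`-bit binary signed-digit representations of the integer `n`. -/
noncomputable def numBSD (n : ℤ) (i : ℕ) : ℕ :=
  Nat.card {b : Fin i → ℤ //
    (∀ j, b j = -1 ∨ b j = 0 ∨ b j = 1) ∧ n = ∑ j, b j * 2 ^ (j : ℕ)}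

theorem bsd_half_plus_one (i : ℕ) (hi : 1 ≤ i) :
    numBSD ((2 : ℤ) ^ (i - 1) + 1) i = i - 1 := by
  obtain ⟨m, rfl⟩ : ∃ m, i = m + 1 := ⟨i - 1, (Nat.succ_pred_eq_of_pos hi).symm⟩
  simp only [Nat.add_sub_cancel]
  unfold numBSD
  set pb : Fin m → (Fin (m+1) → ℤ) :=
    fun k j => if (j:ℕ) = m then 1 else q (k:ℕ) (j:ℕ) with hpb
  have sum_eq : ∀ b : Fin (m+1) → ℤ,
      ∑ j, b j * 2 ^ (j:ℕ)
        = ∑ j ∈ Finset.range (m+1),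
            (if h : j < m+1 then b ⟨j, h⟩ else 0) * 2^j := by
    intro b
    rw [← Fin.sum_univ_eq_sum_range (fun j => (if h : j < m+1 then b ⟨j, h⟩ else 0) * 2^j)]
    apply Finset.sum_congr rfl
    intro j _
    simp [j.isLt]
  have hf : ∀ k : Fin m,
      (∀ j, pb k j = -1 ∨ pb k j = 0 ∨ pb k j = 1) ∧
        (2:ℤ)^m + 1 = ∑ j, pb k j * 2 ^ (j:ℕ) := by
    intro k
    constructor
    · intro j
      simp only [hpb]
      unfold q
      split_ifs <;> simp
    · rw [sum_eq]
      have hc : ∀ j ∈ Finset.range (m+1),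
          (if h : j < m+1 then pb k ⟨j, h⟩ else 0) * 2^j
            = (if j = m then 1 else q (k:ℕ) j) * 2^j := by
        intro j hj
        have : j < m + 1 := Finset.mem_range.mp hj
        simp [hpb, this]
      rw [Finset.sum_congr rfl hc, Finset.sum_range_succ]
      have hc2 : ∀ j ∈ Finset.range m,
          (if j = m then (1:ℤ) else q (k:ℕ) j) * 2^j = q (k:ℕ) j * 2^j := by
        intro j hj
        have : j < m := Finset.mem_range.mp hj
        simp [Nat.ne_of_lt this]
      rw [Finset.sum_congr rfl hc2, q_sum m k k.isLt]
      simp [add_comm]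
  let f : Fin m → {b : Fin (m+1) → ℤ //
      (∀ j, b j = -1 ∨ b j = 0 ∨ b j = 1) ∧ (2:ℤ)^m + 1 = ∑ j, b j * 2 ^ (j:ℕ)} :=
    fun k => ⟨pb k, hf k⟩
  have hbij : Function.Bijective f := by
    constructor
    · intro k k' h
      have hh : pb k = pb k' := congrArg Subtype.val h
      have he := congrFun hh (Fin.castSucc k)
      have hkm : ((Fin.castSucc k : Fin (m+1)) : ℕ) = (k:ℕ) := rfl
      simp only [hpb, hkm] at he
      have hklt : (k:ℕ) ≠ m := Nat.ne_of_lt k.isLt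
      rw [if_neg hklt, if_neg hklt] at he
      unfold q at he
      have : (k:ℕ) = (k':ℕ) := by split_ifs at he <;> omega
      exact Fin.ext this
    · rintro ⟨b, hdig, hsum⟩
      set c : ℕ → ℤ := fun j => if h : j < m+1 then b ⟨j, h⟩ else 0 with hc
      have hdigc : ∀ j, c j = -1 ∨ c j = 0 ∨ c j = 1 := by
        intro j
        simp only [hc]
        split_ifs with h
        · exact hdig _
        · simp
      have hsumc : ∑ j ∈ Finset.range (m+1), c j * 2^j = 2^m + 1 := by
        rw [← sum_eq, ← hsum]
      rw [Finset.sum_range_succ] at hsumc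
      have hcm : c m = b ⟨m, by omega⟩ := by simp [hc]
      have hB := bsd_abs_bound m c hdigc
      rw [abs_le] at hB
      have hpow : (0:ℤ) < 2^m := pow_pos (by norm_num) m
      have hcm1 : c m = 1 := by
        rcases hdigc m with h|h|h
        · exfalso; rw [h] at hsumc; linarith [hB.2]
        · exfalso; rw [h] at hsumc; linarith [hB.2]
        · exact h
      have hS : ∑ j ∈ Finset.range m, c j * 2^j = 1 := by
        rw [hcm1] at hsumc; linarith
      obtain ⟨k, hk, hneg, hone, hzero⟩ := bsd_one m c hdigc hS
      refine ⟨⟨k, hk⟩, ?_⟩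
      apply Subtype.ext
      funext j
      have hbj : b j = c (j:ℕ) := by simp only [hc, dif_pos j.isLt, Fin.eta]
      simp only [f, hpb]
      rw [hbj]
      by_cases hjm : (j:ℕ) = m
      · rw [if_pos hjm, hjm, hcm1]
      · rw [if_neg hjm]
        have hjlt : (j:ℕ) < m := by have := j.isLt; omega
        unfold q
        split_ifs with h1 h2
        · exact (hneg _ h1).symm
        · rw [h2, hone]
        · exact (hzero _ (by omega) hjlt).symm
  have := Nat.card_congr (Equiv.ofBijective f hbij)
  simp only [Nat.card_eq_fintype_card, Fintype.card_fin] at this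
  rw [← this]
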